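/- Let Y = (Y_1,…,Y_n) be a nonnegative random vector with θ_k := E[Y_k] ∈ (0,∞), and suppose for each k ≤ n there is a nonnegative random vector Z^k independent of Y such that E[F(Y + Z^k)] = E[F(Y) · Y_k/θ_k] for all bounded measurable F : R^n → R. Then for all j, k ≤ n and all bounded measurable F, θ_j E[F(Z^j) Z^j_k] = θ_k E[F(Z^k) Z^k_j]. -/

import Mathlib

open MeasureTheory ProbabilityTheory Set
open scoped ENNReal NNReal
noncomputable section SBAux
namespace SBAux

variable {n : ℕ}

def mon (n : ℕ) (m : Fin n → ℕ) : (Fin n → ℝ) → ℝ := fun x => ∏ i, (x i) ^ (m i)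

def monSpan (n : ℕ) : Submodule ℝ ((Fin n → ℝ) → ℝ) := Submodule.span ℝ (Set.range (mon n))

lemma mon_mul (m₁ m₂ : Fin n → ℕ) : mon n m₁ * mon n m₂ = mon n (m₁ + m₂) := by
  funext x
  simp only [mon, Pi.mul_apply, ← Finset.prod_mul_distrib, Pi.add_apply, pow_add]

lemma mon_mem (m : Fin n → ℕ) : mon n m ∈ monSpan n :=
  Submodule.subset_span ⟨m, rfl⟩

lemma monSpan_mul {p q : (Fin n → ℝ) → ℝ} (hp : p ∈ monSpan n) (hq : q ∈ monSpan n) :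
    p * q ∈ monSpan n := by
  have h : monSpan n * monSpan n ≤ monSpan n := by
    rw [monSpan, Submodule.span_mul_span]
    refine Submodule.span_le.2 ?_
    rintro _ ⟨_, ⟨m₁, rfl⟩, _, ⟨m₂, rfl⟩, rfl⟩
    show mon n m₁ * mon n m₂ ∈ _
    rw [mon_mul m₁ m₂]; exact Submodule.subset_span ⟨m₁ + m₂, rfl⟩
  exact h (Submodule.mul_mem_mul hp hq)

lemma one_mem_monSpan : (1 : (Fin n → ℝ) → ℝ) ∈ monSpan n := by
  have : mon n 0 = 1 := by funext x; simp [mon]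
  exact this ▸ mon_mem 0

lemma coord_eq_mon (i : Fin n) : (fun x : Fin n → ℝ => x i) = mon n (Pi.single i 1) := by
  funext x
  simp only [mon]
  rw [Finset.prod_eq_single i]
  · simp
  · intro b _ hb; simp [Pi.single_eq_of_ne hb]
  · simp

lemma mon_measurable (m : Fin n → ℕ) : Measurable (mon n m) := by
  apply Finset.measurable_prod
  intro i _
  exact (measurable_pi_apply i).pow_const _

lemma mon_bound (m : Fin n → ℕ) : ∀ x ∈ Set.Icc (0 : Fin n → ℝ) 1, |mon n m x| ≤ 1 := by
  intro x hx
  simp only [mon]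
  rw [abs_of_nonneg (Finset.prod_nonneg fun i _ => pow_nonneg (hx.1 i) _)]
  apply Finset.prod_le_one
  · exact fun i _ => pow_nonneg (hx.1 i) _
  · exact fun i _ => pow_le_one₀ (hx.1 i) (hx.2 i)

lemma poly_approx (f : (Fin n → ℝ) → ℝ) (hf : Continuous f) {ε : ℝ} (hε : 0 < ε) :
    ∃ q ∈ monSpan n, ∀ x ∈ Set.Icc (0 : Fin n → ℝ) 1, |f x - q x| ≤ ε := by
  set K : Set (Fin n → ℝ) := Set.Icc 0 1 with hK
  haveI : CompactSpace K := isCompact_iff_compactSpace.1 isCompact_Icc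
  -- coordinate functions on K
  let coordFn : Fin n → C(K, ℝ) := fun i => ⟨fun x => (x : Fin n → ℝ) i,
    (continuous_apply i).comp continuous_subtype_val⟩
  let A : Subalgebra ℝ C(K, ℝ) := Algebra.adjoin ℝ (Set.range coordFn)
  have hsep : A.SeparatesPoints := by
    intro x y hxy
    have : (x : Fin n → ℝ) ≠ y := Subtype.coe_injective.ne hxy
    obtain ⟨i, hi⟩ := Function.ne_iff.1 this
    exact ⟨coordFn i, ⟨coordFn i, Algebra.subset_adjoin ⟨i, rfl⟩, rfl⟩, hi⟩
  -- every element of A is the restriction of an element of monSpan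
  have hlift : ∀ p ∈ A, ∃ q ∈ monSpan n, ∀ x : K, q x = p x := by
    intro p hp
    induction hp using Algebra.adjoin_induction with
    | mem g hg =>
      obtain ⟨i, rfl⟩ := hg
      refine ⟨mon n (Pi.single i 1), mon_mem _, fun x => ?_⟩
      rw [← coord_eq_mon]
      rfl
    | algebraMap r =>
      have hc : (fun _ : Fin n → ℝ => r) ∈ monSpan n := by
        simpa [Pi.smul_def] using (monSpan n).smul_mem r one_mem_monSpan
      exact ⟨fun _ => r, hc, fun x => by simp⟩
    | add p₁ p₂ h₁ h₂ ih₁ ih₂ =>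
      obtain ⟨q₁, hq₁, he₁⟩ := ih₁
      obtain ⟨q₂, hq₂, he₂⟩ := ih₂
      exact ⟨q₁ + q₂, Submodule.add_mem _ hq₁ hq₂, fun x => by
        simp [he₁ x, he₂ x]⟩
    | mul p₁ p₂ h₁ h₂ ih₁ ih₂ =>
      obtain ⟨q₁, hq₁, he₁⟩ := ih₁
      obtain ⟨q₂, hq₂, he₂⟩ := ih₂
      exact ⟨q₁ * q₂, monSpan_mul hq₁ hq₂, fun x => by
        simp [he₁ x, he₂ x]⟩
  obtain ⟨g, hg⟩ := ContinuousMap.exists_mem_subalgebra_near_continuous_of_separatesPoints A hsep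
    (fun x : K => f x) (hf.comp continuous_subtype_val) ε hε
  obtain ⟨q, hq, he⟩ := hlift g g.2
  refine ⟨q, hq, fun x hx => ?_⟩
  have := hg ⟨x, hx⟩
  rw [Real.norm_eq_abs] at this
  rw [abs_sub_comm]
  calc |q x - f x| = |(g : K → ℝ) ⟨x, hx⟩ - f x| := by rw [← he ⟨x, hx⟩]
  _ ≤ ε := le_of_lt this





lemma texp_le {c t : ℝ} (hc : 0 < c) (ht : 0 ≤ t) : t * Real.exp (-(c * t)) ≤ c⁻¹ := by
  have h1 : c * t ≤ Real.exp (c * t) := by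
    have := Real.add_one_le_exp (c * t); nlinarith
  rw [Real.exp_neg, mul_inv_le_iff₀ (Real.exp_pos _)]
  calc t = c⁻¹ * (c * t) := by field_simp
  _ ≤ c⁻¹ * Real.exp (c * t) := by gcongr

variable {Ω : Type*} [MeasurableSpace Ω] {n : ℕ}

lemma expo_identity (P : Measure Ω) [IsProbabilityMeasure P]
    (Y : Ω → Fin n → ℝ) (Z : Fin n → Ω → Fin n → ℝ)
    (hYm : Measurable Y) (hZm : ∀ k, Measurable (Z k))
    (hYpos : ∀ ω k, 0 ≤ Y ω k) (hZpos : ∀ k ω i, 0 ≤ Z k ω i)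
    (θ : Fin n → ℝ) (hθpos : ∀ k, 0 < θ k)
    (hindep : ∀ k, IndepFun Y (Z k) P)
    (hiso : ∀ k, ∀ F : (Fin n → ℝ) → ℝ, Measurable F → (∃ C, ∀ x, |F x| ≤ C) →
      ∫ ω, F (Y ω + Z k ω) ∂P = ∫ ω, F (Y ω) * (Y ω k / θ k) ∂P)
    (j k : Fin n) (s : Fin n → ℝ) (hs : ∀ i, 0 < s i) :
    θ j * ∫ ω, Real.exp (-∑ i, s i * Z j ω i) * Z j ω k ∂P
      = θ k * ∫ ω, Real.exp (-∑ i, s i * Z k ω i) * Z k ω j ∂P := by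
  classical
  -- the test functions
  set Fs : (Fin n → ℝ) → ℝ := fun x => Real.exp (-∑ i, s i * max (x i) 0) with hFs
  have hFsm : Measurable Fs := by
    apply Continuous.measurable
    apply Real.continuous_exp.comp
    apply Continuous.neg
    exact continuous_finset_sum _ fun i _ =>
      continuous_const.mul ((continuous_apply i).max continuous_const)
  have hFs_nonneg : ∀ x, 0 ≤ Fs x := fun x => (Real.exp_pos _).le
  have hFs_le_one : ∀ x, Fs x ≤ 1 := by
    intro x
    rw [hFs]
    simp only
    rw [Real.exp_le_one_iff, neg_nonpos]
    exact Finset.sum_nonneg fun i _ => mul_nonneg (hs i).le (le_max_right _ _)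
  have hFsb : ∃ C, ∀ x, |Fs x| ≤ C :=
    ⟨1, fun x => by rw [abs_of_nonneg (hFs_nonneg x)]; exact hFs_le_one x⟩
  -- Gs b = Fs ⬝ (x b)⁺
  set Gs : Fin n → (Fin n → ℝ) → ℝ := fun b x => Fs x * max (x b) 0 with hGs
  have hGsm : ∀ b, Measurable (Gs b) := fun b =>
    hFsm.mul ((measurable_pi_apply b).max measurable_const)
  have hGs_bound : ∀ b x, |Gs b x| ≤ (s b)⁻¹ := by
    intro b x
    have h0 : 0 ≤ max (x b) 0 := le_max_right _ _
    rw [hGs]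
    simp only
    rw [abs_of_nonneg (mul_nonneg (hFs_nonneg x) h0)]
    have h1 : Fs x ≤ Real.exp (-(s b * max (x b) 0)) := by
      rw [hFs]
      simp only
      apply Real.exp_le_exp.2
      rw [neg_le_neg_iff]
      exact Finset.single_le_sum
        (fun i _ => mul_nonneg (hs i).le (le_max_right _ _)) (Finset.mem_univ b)
    calc Fs x * max (x b) 0 ≤ Real.exp (-(s b * max (x b) 0)) * max (x b) 0 := by
          exact mul_le_mul_of_nonneg_right h1 h0
    _ = max (x b) 0 * Real.exp (-(s b * max (x b) 0)) := mul_comm _ _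
    _ ≤ (s b)⁻¹ := texp_le (hs b) h0
  have hGsb : ∀ b, ∃ C, ∀ x, |Gs b x| ≤ C := fun b => ⟨(s b)⁻¹, hGs_bound b⟩
  -- pointwise values
  have hFsY : ∀ ω, Fs (Y ω) = Real.exp (-∑ i, s i * Y ω i) := by
    intro ω; rw [hFs]; simp only
    congr 1
    rw [neg_inj]
    exact Finset.sum_congr rfl fun i _ => by rw [max_eq_left (hYpos ω i)]
  have hFsZ : ∀ a ω, Fs (Z a ω) = Real.exp (-∑ i, s i * Z a ω i) := by
    intro a ω; rw [hFs]; simp only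
    congr 1
    rw [neg_inj]
    exact Finset.sum_congr rfl fun i _ => by rw [max_eq_left (hZpos a ω i)]
  have hFs_add : ∀ a ω, Fs (Y ω + Z a ω) = Fs (Y ω) * Fs (Z a ω) := by
    intro a ω
    rw [hFsY, hFsZ, hFs]
    simp only [Pi.add_apply]
    rw [← Real.exp_add]
    congr 1
    have : ∀ i, max (Y ω i + Z a ω i) 0 = Y ω i + Z a ω i :=
      fun i => max_eq_left (add_nonneg (hYpos ω i) (hZpos a ω i))
    simp only [this]
    rw [← neg_add, ← Finset.sum_add_distrib]
    congr 1
    exact Finset.sum_congr rfl fun i _ => by ring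
  have hGsY : ∀ b ω, Gs b (Y ω) = Fs (Y ω) * Y ω b := by
    intro b ω; rw [hGs]; simp only
    rw [max_eq_left (hYpos ω b)]
  have hGsZ : ∀ a b ω, Gs b (Z a ω) = Fs (Z a ω) * Z a ω b := by
    intro a b ω; rw [hGs]; simp only
    rw [max_eq_left (hZpos a ω b)]
  -- independence splitting
  have split : ∀ (a : Fin n) (φ ψ : (Fin n → ℝ) → ℝ), Measurable φ → Measurable ψ →
      ∫ ω, φ (Y ω) * ψ (Z a ω) ∂P = (∫ ω, φ (Y ω) ∂P) * ∫ ω, ψ (Z a ω) ∂P := by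
    intro a φ ψ hφ hψ
    exact ((hindep a).comp hφ hψ).integral_mul_eq_mul_integral
      (hφ.comp hYm).aestronglyMeasurable (hψ.comp (hZm a)).aestronglyMeasurable
  -- integrability of bounded measurable functions
  have intg : ∀ (f : Ω → ℝ) (C : ℝ), Measurable f → (∀ ω, |f ω| ≤ C) → Integrable f P := by
    intro f C hf hC
    exact ⟨hf.aestronglyMeasurable,
      HasFiniteIntegral.of_bounded (C := C) (ae_of_all _ fun ω => by
        rw [Real.norm_eq_abs]; exact hC ω)⟩
  -- abbreviations
  set L : ℝ := ∫ ω, Fs (Y ω) ∂P with hL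
  set M : Fin n → ℝ := fun a => ∫ ω, Fs (Z a ω) ∂P with hM
  set N : Fin n → Fin n → ℝ := fun a b => ∫ ω, Fs (Z a ω) * Z a ω b ∂P with hN
  set Pb : Fin n → ℝ := fun b => ∫ ω, Fs (Y ω) * Y ω b ∂P with hPb
  set Q : ℝ := ∫ ω, (Fs (Y ω) * Y ω k) * Y ω j ∂P with hQ
  -- identity (1): L * M a = (θ a)⁻¹ * Pb a
  have one : ∀ a, L * M a = (θ a)⁻¹ * Pb a := by
    intro a
    have h := hiso a Fs hFsm hFsb
    have hl : ∫ ω, Fs (Y ω + Z a ω) ∂P = L * M a := by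
      rw [← split a Fs Fs hFsm hFsm]
      exact integral_congr_ae (ae_of_all _ fun ω => hFs_add a ω)
    have hr : ∫ ω, Fs (Y ω) * (Y ω a / θ a) ∂P = (θ a)⁻¹ * Pb a := by
      rw [hPb]
      simp only
      rw [← integral_const_mul]
      exact integral_congr_ae (ae_of_all _ fun ω => by simp only []; rw [div_eq_inv_mul]; ring)
    rw [← hl, h, hr]
  -- identity (2): Pb b * M a + L * N a b = (θ a)⁻¹ * ∫ (Fs(Y) Y_b) Y_a
  have two : ∀ a b, Pb b * M a + L * N a b = (θ a)⁻¹ * ∫ ω, (Fs (Y ω) * Y ω b) * Y ω a ∂P := by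
    intro a b
    have h := hiso a (Gs b) (hGsm b) (hGsb b)
    -- left side of h
    have hint1 : Integrable (fun ω => Gs b (Y ω) * Fs (Z a ω)) P := by
      apply intg _ ((s b)⁻¹)
      · exact ((hGsm b).comp hYm).mul (hFsm.comp (hZm a))
      · intro ω
        rw [abs_mul]
        calc |Gs b (Y ω)| * |Fs (Z a ω)| ≤ (s b)⁻¹ * 1 := by
              apply mul_le_mul (hGs_bound b _) ?_ (abs_nonneg _) (inv_nonneg.2 (hs b).le)
              rw [abs_of_nonneg (hFs_nonneg _)]
              exact hFs_le_one _
        _ = (s b)⁻¹ := mul_one _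
    have hint2 : Integrable (fun ω => Fs (Y ω) * Gs b (Z a ω)) P := by
      apply intg _ ((s b)⁻¹)
      · exact (hFsm.comp hYm).mul ((hGsm b).comp (hZm a))
      · intro ω
        rw [abs_mul]
        calc |Fs (Y ω)| * |Gs b (Z a ω)| ≤ 1 * (s b)⁻¹ := by
              apply mul_le_mul ?_ (hGs_bound b _) (abs_nonneg _) zero_le_one
              rw [abs_of_nonneg (hFs_nonneg _)]
              exact hFs_le_one _
        _ = (s b)⁻¹ := one_mul _
    have hl : ∫ ω, Gs b (Y ω + Z a ω) ∂P = Pb b * M a + L * N a b := by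
      have hpt : ∀ ω, Gs b (Y ω + Z a ω)
          = Gs b (Y ω) * Fs (Z a ω) + Fs (Y ω) * Gs b (Z a ω) := by
        intro ω
        rw [hGsY b ω, hGsZ a b ω]
        simp only [hGs, Pi.add_apply]
        rw [hFs_add a ω, max_eq_left (add_nonneg (hYpos ω b) (hZpos a ω b))]
        ring
      rw [integral_congr_ae (ae_of_all _ hpt), integral_add hint1 hint2]
      congr 1
      · rw [split a (Gs b) Fs (hGsm b) hFsm]
        congr 1
        exact integral_congr_ae (ae_of_all _ fun ω => hGsY b ω)
      · rw [split a Fs (Gs b) hFsm (hGsm b)]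
        congr 1
        exact integral_congr_ae (ae_of_all _ fun ω => hGsZ a b ω)
    have hr : ∫ ω, Gs b (Y ω) * (Y ω a / θ a) ∂P
        = (θ a)⁻¹ * ∫ ω, (Fs (Y ω) * Y ω b) * Y ω a ∂P := by
      rw [← integral_const_mul]
      exact integral_congr_ae (ae_of_all _ fun ω => by
        simp only []; rw [hGsY b ω, div_eq_inv_mul]; ring)
    rw [← hl, h, hr]
  -- L > 0
  have hLpos : 0 < L := by
    rw [hL]
    have hint : Integrable (fun ω => Fs (Y ω)) P := by
      apply intg _ 1 (hFsm.comp hYm)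
      intro ω
      have : |Fs (Y ω)| ≤ 1 := by
        rw [abs_of_nonneg (hFs_nonneg _)]; exact hFs_le_one _
      exact this
    rw [integral_pos_iff_support_of_nonneg_ae (ae_of_all _ fun ω => hFs_nonneg (Y ω)) hint]
    have : Function.support (fun ω => Fs (Y ω)) = Set.univ := by
      ext ω
      simp [Function.mem_support, (Real.exp_pos _).ne', hFs]
    rw [this]
    simp
  -- final algebra
  have e1 := two j k
  have e2 := two k j
  have hQQ : ∫ ω, (Fs (Y ω) * Y ω j) * Y ω k ∂P = ∫ ω, (Fs (Y ω) * Y ω k) * Y ω j ∂P :=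
    integral_congr_ae (ae_of_all _ fun ω => by ring)
  rw [hQQ] at e2
  have o1 := one j
  have o2 := one k
  -- θ a * (Pb b * M a + L * N a b) = ∫ ...
  have e1' : θ j * (Pb k * M j + L * N j k) = ∫ ω, (Fs (Y ω) * Y ω k) * Y ω j ∂P := by
    rw [e1, ← mul_assoc, mul_inv_cancel₀ (hθpos j).ne', one_mul]
  have e2' : θ k * (Pb j * M k + L * N k j) = ∫ ω, (Fs (Y ω) * Y ω k) * Y ω j ∂P := by
    rw [e2, ← mul_assoc, mul_inv_cancel₀ (hθpos k).ne', one_mul]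
  have o1' : Pb j = θ j * (L * M j) := by
    rw [o1, ← mul_assoc, mul_inv_cancel₀ (hθpos j).ne', one_mul]
  have o2' : Pb k = θ k * (L * M k) := by
    rw [o2, ← mul_assoc, mul_inv_cancel₀ (hθpos k).ne', one_mul]
  have key : L * (θ j * N j k) = L * (θ k * N k j) := by
    have := e1'.trans e2'.symm
    rw [o1', o2'] at this
    nlinarith [this]
  have hfin : θ j * N j k = θ k * N k j := mul_left_cancel₀ hLpos.ne' key
  -- rewrite goal in terms of N
  calc θ j * ∫ ω, Real.exp (-∑ i, s i * Z j ω i) * Z j ω k ∂P = θ j * N j k := by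
        rw [hN]
        congr 1
        exact integral_congr_ae (ae_of_all _ fun ω => by simp only []; rw [hFsZ j ω])
  _ = θ k * N k j := hfin
  _ = θ k * ∫ ω, Real.exp (-∑ i, s i * Z k ω i) * Z k ω j ∂P := by
        rw [hN]
        congr 1
        exact integral_congr_ae (ae_of_all _ fun ω => by simp only []; rw [hFsZ k ω])


end SBAux

open SBAux

/-- Symmetry identity: if the nonnegative random vector `Y` satisfies the isomorphism
property `E[F(Y + Z^k)] = E[F(Y) Y_k/θ_k]` for all `k` (with `Z^k` nonnegative and
independent of `Y`), then for all `j, k` and bounded measurable `F`,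
`θ_j E[F(Z^j) Z^j_k] = θ_k E[F(Z^k) Z^k_j]`. -/
theorem size_biased_symmetry_identity {Ω : Type*} [MeasurableSpace Ω]
    (P : Measure Ω) [IsProbabilityMeasure P] (n : ℕ)
    (Y : Ω → Fin n → ℝ) (Z : Fin n → Ω → Fin n → ℝ)
    (hYm : Measurable Y) (hZm : ∀ k, Measurable (Z k))
    (hYpos : ∀ ω k, 0 ≤ Y ω k) (hZpos : ∀ k ω i, 0 ≤ Z k ω i)
    (θ : Fin n → ℝ) (hθpos : ∀ k, 0 < θ k) (hθfin : ∀ k, ∫ ω, Y ω k ∂P = θ k)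
    (hindep : ∀ k, IndepFun Y (Z k) P)
    (hiso : ∀ k, ∀ F : (Fin n → ℝ) → ℝ, Measurable F → (∃ C, ∀ x, |F x| ≤ C) →
      ∫ ω, F (Y ω + Z k ω) ∂P = ∫ ω, F (Y ω) * (Y ω k / θ k) ∂P) :
    ∀ j k, ∀ F : (Fin n → ℝ) → ℝ, Measurable F → (∃ C, ∀ x, |F x| ≤ C) →
      θ j * ∫ ω, F (Z j ω) * Z j ω k ∂P = θ k * ∫ ω, F (Z k ω) * Z k ω j ∂P := by
  intro j k F hFm hFb
  classical
  -- the transformed variables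
  set W : Fin n → Ω → Fin n → ℝ := fun a ω i => Real.exp (-(Z a ω i)) with hW
  have hWm : ∀ a, Measurable (W a) := by
    intro a
    apply measurable_pi_lambda
    intro i
    exact Real.measurable_exp.comp ((measurable_pi_apply i).comp (hZm a)).neg
  have hWmem : ∀ a ω, W a ω ∈ Set.Icc (0 : Fin n → ℝ) 1 := by
    intro a ω
    constructor
    · intro i
      exact (Real.exp_pos _).le
    · intro i
      simp only [hW, Pi.one_apply]
      rw [Real.exp_le_one_iff, neg_nonpos]
      exact hZpos a ω i
  -- the densities
  set dens : Fin n → Fin n → Ω → ℝ≥0 := fun a b ω =>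
    Real.toNNReal (θ a * (Z a ω b * Real.exp (-∑ i, Z a ω i))) with hdens
  have hdensm : ∀ a b, Measurable (dens a b) := by
    intro a b
    apply Measurable.real_toNNReal
    apply measurable_const.mul
    apply Measurable.mul
    · exact (measurable_pi_apply b).comp (hZm a)
    · apply Real.measurable_exp.comp
      apply Measurable.neg
      exact Finset.measurable_sum _ fun i _ => (measurable_pi_apply i).comp (hZm a)
  have hdens_le : ∀ a b ω, (dens a b ω : ℝ) ≤ θ a := by
    intro a b ω
    rw [hdens]
    simp only
    rw [Real.coe_toNNReal']
    apply max_le _ (hθpos a).le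
    have h1 : Z a ω b * Real.exp (-∑ i, Z a ω i) ≤ 1 := by
      have hsum : Z a ω b ≤ ∑ i, Z a ω i :=
        Finset.single_le_sum (fun i _ => hZpos a ω i) (Finset.mem_univ b)
      calc Z a ω b * Real.exp (-∑ i, Z a ω i) ≤ Z a ω b * Real.exp (-(1 * Z a ω b)) := by
            apply mul_le_mul_of_nonneg_left _ (hZpos a ω b)
            apply Real.exp_le_exp.2
            rw [neg_le_neg_iff, one_mul]
            exact hsum
      _ ≤ 1⁻¹ := texp_le one_pos (hZpos a ω b)
      _ = 1 := inv_one
    calc θ a * (Z a ω b * Real.exp (-∑ i, Z a ω i)) ≤ θ a * 1 :=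
          mul_le_mul_of_nonneg_left h1 (hθpos a).le
    _ = θ a := mul_one _
  -- the measures
  set κ : Fin n → Fin n → Measure (Fin n → ℝ) := fun a b =>
    (P.withDensity (fun ω => ((dens a b ω : ℝ≥0) : ℝ≥0∞))).map (W a) with hκ
  have hκfin : ∀ a b, IsFiniteMeasure (κ a b) := by
    intro a b
    constructor
    rw [hκ]
    simp only
    rw [Measure.map_apply (hWm a) MeasurableSet.univ, Set.preimage_univ, withDensity_apply _ MeasurableSet.univ,
      Measure.restrict_univ]
    calc ∫⁻ ω, ((dens a b ω : ℝ≥0) : ℝ≥0∞) ∂P ≤ ∫⁻ _, ENNReal.ofReal (θ a) ∂P := by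
          apply lintegral_mono
          intro ω
          calc ((dens a b ω : ℝ≥0) : ℝ≥0∞)
              = ENNReal.ofReal ((dens a b ω : ℝ≥0) : ℝ) := (ENNReal.ofReal_coe_nnreal).symm
          _ ≤ ENNReal.ofReal (θ a) := ENNReal.ofReal_le_ofReal (hdens_le a b ω)
    _ = ENNReal.ofReal (θ a) := by rw [lintegral_const, measure_univ, mul_one]
    _ < ⊤ := ENNReal.ofReal_lt_top
  -- the support
  have hκsupp : ∀ a b, (κ a b) (Set.Icc (0 : Fin n → ℝ) 1)ᶜ = 0 := by
    intro a b
    rw [hκ]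
    simp only
    rw [Measure.map_apply (hWm a) measurableSet_Icc.compl]
    have : (W a) ⁻¹' (Set.Icc (0 : Fin n → ℝ) 1)ᶜ = ∅ := by
      ext ω
      simp only [Set.mem_preimage, Set.mem_compl_iff, Set.mem_empty_iff_false, iff_false,
        not_not]
      exact hWmem a ω
    rw [this]
    simp
  have hκae : ∀ a b, ∀ᵐ u ∂(κ a b), u ∈ Set.Icc (0 : Fin n → ℝ) 1 := by
    intro a b
    rw [ae_iff]
    have : {u : Fin n → ℝ | ¬u ∈ Set.Icc (0 : Fin n → ℝ) 1} = (Set.Icc (0:Fin n → ℝ) 1)ᶜ := rfl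
    rw [this]
    exact hκsupp a b
  -- the key change-of-variables identity
  have dagger : ∀ (a b : Fin n) (g : (Fin n → ℝ) → ℝ), Measurable g →
      ∫ u, g u ∂(κ a b)
        = ∫ ω, (θ a * (Z a ω b * Real.exp (-∑ i, Z a ω i))) * g (W a ω) ∂P := by
    intro a b g hg
    rw [hκ]
    simp only
    rw [integral_map (hWm a).aemeasurable hg.aestronglyMeasurable]
    rw [integral_withDensity_eq_integral_smul (hdensm a b)]
    apply integral_congr_ae (ae_of_all _ _)
    intro ω
    rw [NNReal.smul_def, smul_eq_mul]
    congr 1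
    rw [hdens]
    simp only
    exact Real.coe_toNNReal _
      (mul_nonneg (hθpos a).le (mul_nonneg (hZpos a ω b) (Real.exp_pos _).le))
  -- integrability of functions bounded on the cube
  have integ_of : ∀ (q : (Fin n → ℝ) → ℝ), Measurable q →
      (∃ C, ∀ x ∈ Set.Icc (0 : Fin n → ℝ) 1, |q x| ≤ C) → ∀ a b, Integrable q (κ a b) := by
    intro q hq ⟨C, hC⟩ a b
    haveI := hκfin a b
    refine ⟨hq.aestronglyMeasurable, ?_⟩
    apply HasFiniteIntegral.of_bounded (C := C)
    filter_upwards [hκae a b] with u hu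
    rw [Real.norm_eq_abs]
    exact hC u hu
  -- equality of monomial integrals
  have keyM : ∀ (a b : Fin n) (m : Fin n → ℕ),
      ∫ u, mon n m u ∂(κ a b)
        = θ a * ∫ ω, Real.exp (-∑ i, ((m i : ℝ) + 1) * Z a ω i) * Z a ω b ∂P := by
    intro a b m
    rw [dagger a b _ (mon_measurable m), ← integral_const_mul]
    apply integral_congr_ae (ae_of_all _ _)
    intro ω
    have h1 : mon n m (W a ω) = Real.exp (-∑ i, (m i : ℝ) * Z a ω i) := by
      rw [mon]
      simp only [hW]
      simp only [← Real.exp_nat_mul]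
      rw [← Real.exp_sum]
      congr 1
      rw [← Finset.sum_neg_distrib]
      apply Finset.sum_congr rfl
      intro i _
      ring
    rw [h1]
    have h2 : (-∑ i, Z a ω i) + (-∑ i, (m i : ℝ) * Z a ω i)
        = -∑ i, ((m i : ℝ) + 1) * Z a ω i := by
      rw [← neg_add, ← Finset.sum_add_distrib]
      congr 1
      apply Finset.sum_congr rfl
      intro i _
      ring
    calc θ a * (Z a ω b * Real.exp (-∑ i, Z a ω i)) * Real.exp (-∑ i, (m i:ℝ) * Z a ω i)
        = θ a * (Real.exp ((-∑ i, Z a ω i) + (-∑ i, (m i : ℝ) * Z a ω i)) * Z a ω b) := by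
          rw [Real.exp_add]; ring
    _ = θ a * (Real.exp (-∑ i, ((m i : ℝ) + 1) * Z a ω i) * Z a ω b) := by rw [h2]
  have monEq : ∀ m : Fin n → ℕ, ∫ u, mon n m u ∂(κ j k) = ∫ u, mon n m u ∂(κ k j) := by
    intro m
    rw [keyM j k m, keyM k j m]
    exact expo_identity P Y Z hYm hZm hYpos hZpos θ hθpos hindep hiso j k
      (fun i => (m i : ℝ) + 1) (fun i => by positivity)
  -- extend to the span of monomials
  have spanEq : ∀ q ∈ monSpan n, Measurable q ∧
      (∃ C, ∀ x ∈ Set.Icc (0 : Fin n → ℝ) 1, |q x| ≤ C) ∧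
      ∫ u, q u ∂(κ j k) = ∫ u, q u ∂(κ k j) := by
    intro q hq
    induction hq using Submodule.span_induction with
    | mem g hg =>
      obtain ⟨m, rfl⟩ := hg
      exact ⟨mon_measurable m, ⟨1, mon_bound m⟩, monEq m⟩
    | zero =>
      refine ⟨measurable_const, ⟨0, fun x _ => by simp⟩, by simp⟩
    | add p₁ p₂ hp₁ hp₂ ih₁ ih₂ =>
      obtain ⟨hm₁, ⟨C₁, hb₁⟩, he₁⟩ := ih₁
      obtain ⟨hm₂, ⟨C₂, hb₂⟩, he₂⟩ := ih₂
      refine ⟨hm₁.add hm₂, ⟨C₁ + C₂, fun x hx => ?_⟩, ?_⟩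
      · calc |(p₁ + p₂) x| ≤ |p₁ x| + |p₂ x| := abs_add_le _ _
        _ ≤ C₁ + C₂ := add_le_add (hb₁ x hx) (hb₂ x hx)
      · have i₁ := integ_of p₁ hm₁ ⟨C₁, hb₁⟩
        have i₂ := integ_of p₂ hm₂ ⟨C₂, hb₂⟩
        have : ∀ u, (p₁ + p₂) u = p₁ u + p₂ u := fun u => rfl
        rw [integral_congr_ae (ae_of_all _ this), integral_congr_ae (ae_of_all _ this),
          integral_add (i₁ j k) (i₂ j k), integral_add (i₁ k j) (i₂ k j), he₁, he₂]
    | smul r p hp ih =>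
      obtain ⟨hm, ⟨C, hb⟩, he⟩ := ih
      refine ⟨hm.const_smul r, ⟨|r| * C, fun x hx => ?_⟩, ?_⟩
      · have : (r • p) x = r * p x := rfl
        rw [this, abs_mul]
        exact mul_le_mul_of_nonneg_left (hb x hx) (abs_nonneg r)
      · have : ∀ u, (r • p) u = r * p u := fun u => rfl
        rw [integral_congr_ae (ae_of_all _ this), integral_congr_ae (ae_of_all _ this),
          integral_const_mul, integral_const_mul, he]
  -- equality of the two measures
  have hmeas_eq : κ j k = κ k j := by
    haveI := hκfin j k
    haveI := hκfin k j
    apply ext_of_forall_lintegral_eq_of_IsFiniteMeasure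
    intro f
    have hfc : Continuous fun u => (f u : ℝ) := NNReal.continuous_coe.comp f.continuous
    have hbnd : ∃ C, ∀ x, |(f x : ℝ)| ≤ C := by
      obtain ⟨Cb, hCb⟩ := f.bounded
      refine ⟨(f 0 : ℝ) + Cb, fun x => ?_⟩
      have hd := hCb x 0
      rw [NNReal.dist_eq] at hd
      rw [abs_of_nonneg (f x).coe_nonneg]
      have : |(f x : ℝ) - (f 0 : ℝ)| ≤ Cb := hd
      have h2 := abs_sub_abs_le_abs_sub ((f x : ℝ)) ((f 0 : ℝ))
      rw [abs_of_nonneg (f x).coe_nonneg, abs_of_nonneg (f 0).coe_nonneg] at h2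
      linarith [le_trans h2 this]
    obtain ⟨Cf, hCf⟩ := hbnd
    have hfint : ∀ a b, Integrable (fun u => (f u : ℝ)) (κ a b) := by
      intro a b
      apply integ_of _ hfc.measurable
      exact ⟨Cf, fun x _ => hCf x⟩
    rw [lintegral_coe_eq_integral f (hfint j k), lintegral_coe_eq_integral f (hfint k j)]
    congr 1
    -- ε-approximation argument
    set m₁ := ((κ j k) Set.univ).toReal with hm₁
    set m₂ := ((κ k j) Set.univ).toReal with hm₂
    have hm₁0 : 0 ≤ m₁ := ENNReal.toReal_nonneg
    have hm₂0 : 0 ≤ m₂ := ENNReal.toReal_nonneg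
    have habs : ∀ ε > (0:ℝ), |∫ u, (f u : ℝ) ∂(κ j k) - ∫ u, (f u : ℝ) ∂(κ k j)| ≤ ε := by
      intro ε hε
      set δ := ε / (m₁ + m₂ + 1) with hδ
      have hδpos : 0 < δ := by positivity
      obtain ⟨q, hq, happ⟩ := poly_approx _ hfc hδpos
      obtain ⟨hqm, hqb, hqe⟩ := spanEq q hq
      have hqint := integ_of q hqm hqb
      have key : ∀ a b, Integrable (fun u => (f u : ℝ)) (κ a b) → Integrable q (κ a b) →
          |∫ u, (f u : ℝ) ∂(κ a b) - ∫ u, q u ∂(κ a b)| ≤ δ * ((κ a b) Set.univ).toReal := by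
        intro a b h1 h2
        haveI := hκfin a b
        rw [← integral_sub h1 h2]
        rw [← Real.norm_eq_abs]
        apply norm_integral_le_of_norm_le_const
        filter_upwards [hκae a b] with u hu
        rw [Real.norm_eq_abs]
        exact happ u hu
      calc |∫ u, (f u : ℝ) ∂(κ j k) - ∫ u, (f u : ℝ) ∂(κ k j)|
          ≤ |∫ u, (f u : ℝ) ∂(κ j k) - ∫ u, q u ∂(κ j k)|
            + |∫ u, q u ∂(κ k j) - ∫ u, (f u : ℝ) ∂(κ k j)| := by
            have hsplit : ∫ u, (f u : ℝ) ∂(κ j k) - ∫ u, (f u : ℝ) ∂(κ k j)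
                = (∫ u, (f u : ℝ) ∂(κ j k) - ∫ u, q u ∂(κ j k))
                  + (∫ u, q u ∂(κ k j) - ∫ u, (f u : ℝ) ∂(κ k j)) := by rw [hqe]; ring
            rw [hsplit]
            exact abs_add_le _ _
      _ ≤ δ * m₁ + δ * m₂ := by
            apply add_le_add
            · exact key j k (hfint j k) (hqint j k)
            · rw [abs_sub_comm]
              exact key k j (hfint k j) (hqint k j)
      _ = δ * (m₁ + m₂) := by ring
      _ ≤ ε := by
            rw [hδ, div_mul_eq_mul_div, div_le_iff₀ (by positivity)]
            nlinarith
    have h0 : |∫ u, (f u : ℝ) ∂(κ j k) - ∫ u, (f u : ℝ) ∂(κ k j)| ≤ 0 := by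
      apply le_of_forall_pos_le_add
      intro ε hε
      rw [zero_add]
      exact habs ε hε
    have := abs_nonneg (∫ u, (f u : ℝ) ∂(κ j k) - ∫ u, (f u : ℝ) ∂(κ k j))
    have : |∫ u, (f u : ℝ) ∂(κ j k) - ∫ u, (f u : ℝ) ∂(κ k j)| = 0 := le_antisymm h0 this
    linarith [abs_eq_zero.1 this, sub_eq_zero.1 (abs_eq_zero.1 this)]
  -- conclude
  set g : (Fin n → ℝ) → ℝ := fun u => F (fun i => -Real.log (u i)) * ∏ i, (u i)⁻¹ with hg
  have hgm : Measurable g := by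
    apply Measurable.mul
    · apply hFm.comp
      apply measurable_pi_lambda
      intro i
      exact (Real.measurable_log.comp (measurable_pi_apply i)).neg
    · exact Finset.measurable_prod _ fun i _ => (measurable_pi_apply i).inv
  have hgW : ∀ a ω, g (W a ω) = F (Z a ω) * Real.exp (∑ i, Z a ω i) := by
    intro a ω
    rw [hg]
    simp only [hW]
    congr 1
    · congr 1
      funext i
      simp [Real.log_exp]
    · simp only [← Real.exp_neg, neg_neg]
      exact (Real.exp_sum _ _).symm
  have final : ∀ a b, ∫ u, g u ∂(κ a b) = θ a * ∫ ω, F (Z a ω) * Z a ω b ∂P := by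
    intro a b
    rw [dagger a b g hgm, ← integral_const_mul]
    apply integral_congr_ae (ae_of_all _ _)
    intro ω
    rw [hgW a ω]
    have hcancel : Real.exp (-∑ i, Z a ω i) * Real.exp (∑ i, Z a ω i) = 1 := by
      rw [← Real.exp_add, neg_add_cancel, Real.exp_zero]
    calc θ a * (Z a ω b * Real.exp (-∑ i, Z a ω i)) * (F (Z a ω) * Real.exp (∑ i, Z a ω i))
        = θ a * (F (Z a ω) * Z a ω b) * (Real.exp (-∑ i, Z a ω i) * Real.exp (∑ i, Z a ω i)) := by
          ring
    _ = θ a * (F (Z a ω) * Z a ω b) := by rw [hcancel, mul_one]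
  rw [← final j k, ← final k j, hmeas_eq]
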